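/- (The value returned by the msu3 algorithm is the MaxSat solution.) For any CNF formula C : Fin m → Clause, the quantity m − MaxSat(C) equals the least natural number k for which there exist an assignment α : V → Bool and blocking values b : Fin m → Bool with exactly k indices i having b i = true, such that α satisfies C i for every i with b i = false. Equivalently, if λ is this least k, then the algorithm's return value m − λ equals MaxSat(C). -/

import Mathlib

attribute [local instance] Classical.propDecidable

/-- A clause is a finite set of literals; a literal is a pair (variable, polarity). -/
abbrev Clause (V : Type*) := Finset (V × Bool)

/-- An assignment satisfies a clause iff it satisfies at least one of its literals. -/
def SatClause {V : Type*} (α : V → Bool) (ω : Clause V) : Prop :=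
  ∃ l ∈ ω, α l.1 = l.2

/-- The number of clauses of the CNF formula `C` satisfied by the assignment `α`. -/
noncomputable def numSat {V : Type*} {m : ℕ} (C : Fin m → Clause V) (α : V → Bool) : ℕ :=
  (Finset.univ.filter (fun i => SatClause α (C i))).card

/-- `MaxSat(C)`: the maximum, over all assignments `α`, of the number of satisfied clauses. -/
noncomputable def maxSat {V : Type*} {m : ℕ} (C : Fin m → Clause V) : ℕ :=
  sSup { n | ∃ α : V → Bool, n = numSat C α }

lemma numSat_le {V : Type*} {m : ℕ} (C : Fin m → Clause V) (α : V → Bool) :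
    numSat C α ≤ m := by
  classical
  calc (Finset.univ.filter (fun i => SatClause α (C i))).card
      ≤ (Finset.univ : Finset (Fin m)).card := Finset.card_filter_le _ _
    _ = m := by simp

lemma maxSat_mem {V : Type*} {m : ℕ} (C : Fin m → Clause V) :
    maxSat C ∈ { n | ∃ α : V → Bool, n = numSat C α } := by
  apply Nat.sSup_mem
  · exact ⟨numSat C (fun _ => true), ⟨_, rfl⟩⟩
  · exact ⟨m, fun n hn => by obtain ⟨α, rfl⟩ := hn; exact numSat_le C α⟩

lemma maxSat_le {V : Type*} {m : ℕ} (C : Fin m → Clause V) : maxSat C ≤ m := by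
  obtain ⟨α, h⟩ := maxSat_mem C
  rw [h]; exact numSat_le C α

lemma numSat_le_maxSat {V : Type*} {m : ℕ} (C : Fin m → Clause V) (α : V → Bool) :
    numSat C α ≤ maxSat C :=
  le_csSup ⟨m, fun n hn => by obtain ⟨β, rfl⟩ := hn; exact numSat_le C β⟩ ⟨α, rfl⟩

theorem stmt7 {V : Type*} {m : ℕ} (C : Fin m → Clause V) :
    m - maxSat C =
      sInf { k : ℕ | ∃ (α : V → Bool) (b : Fin m → Bool),
        (Finset.univ.filter (fun i => b i = true)).card = k ∧
        ∀ i, b i = false → SatClause α (C i) } ∧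
    m - sInf { k : ℕ | ∃ (α : V → Bool) (b : Fin m → Bool),
        (Finset.univ.filter (fun i => b i = true)).card = k ∧
        ∀ i, b i = false → SatClause α (C i) } = maxSat C := by
  classical
  set K := { k : ℕ | ∃ (α : V → Bool) (b : Fin m → Bool),
        (Finset.univ.filter (fun i => b i = true)).card = k ∧
        ∀ i, b i = false → SatClause α (C i) } with hK
  have hmem : m - maxSat C ∈ K := by
    obtain ⟨α, hα⟩ := maxSat_mem C
    refine ⟨α, fun i => decide (¬ SatClause α (C i)), ?_, ?_⟩
    · have : (Finset.univ.filter (fun i => (decide (¬ SatClause α (C i))) = true))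
          = Finset.univ.filter (fun i => ¬ SatClause α (C i)) := by
        apply Finset.filter_congr
        intro i _
        simp
      rw [this, Finset.filter_not, Finset.card_sdiff_of_subset (Finset.filter_subset _ _),
        Finset.card_univ, hα, numSat, Fintype.card_fin]
    · intro i hi
      by_contra h
      simp [h] at hi
  have hlb : ∀ k ∈ K, m - maxSat C ≤ k := by
    rintro k ⟨α, b, hcard, hsat⟩
    have hsub : Finset.univ.filter (fun i => b i = false)
        ⊆ Finset.univ.filter (fun i => SatClause α (C i)) := by
      intro i hi
      simp only [Finset.mem_filter, Finset.mem_univ, true_and] at hi ⊢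
      exact hsat i hi
    have hfalse : (Finset.univ.filter (fun i => b i = false)).card = m - k := by
      have : (Finset.univ.filter (fun i => b i = false))
          = Finset.univ \ Finset.univ.filter (fun i => b i = true) := by
        rw [← Finset.filter_not]
        apply Finset.filter_congr
        intro i _
        simp
      rw [this, Finset.card_sdiff_of_subset (Finset.filter_subset _ _), Finset.card_univ, hcard, Fintype.card_fin]
    have h1 : m - k ≤ numSat C α := by
      rw [← hfalse]; exact Finset.card_le_card hsub
    have h2 : numSat C α ≤ maxSat C := numSat_le_maxSat C α
    omega
  have heq : m - maxSat C = sInf K :=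
    le_antisymm (le_csInf ⟨_, hmem⟩ hlb) (csInf_le (OrderBot.bddBelow K) hmem)
  refine ⟨heq, ?_⟩
  rw [← heq]
  have := maxSat_le C
  omega
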